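/- For all nonnegative integers m and n, sum_{j=0}^n q^{(2m+1)j} (n choose j)_{q^2} = (-q;q)_n * sum_{j=0}^m (-1)^j q^{j^2} (m choose j)_{q^2} (q^{n-j+1}; q)_j. In particular, (-q;q)_n = prod_{i=1}^n(1+q^i) divides sum_{j=0}^n q^{(2m+1)j} (n choose j)_{q^2} in Z[q]. -/
import Mathlib


open Finset

/-- Gaussian (q-)binomial coefficient, defined over any commutative ring by the
Pascal-type recurrence `[n+1, k+1] = [n, k] + q^(k+1) * [n, k+1]`. -/
def qbinom {R : Type*} [CommRing R] (q : R) : ℕ → ℕ → R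
  | _, 0 => 1
  | 0, _ + 1 => 0
  | n + 1, k + 1 => qbinom q n k + q ^ (k + 1) * qbinom q n (k + 1)

section
variable {R : Type*} [CommRing R] (q : R)

lemma qbinom_zero_right (n : ℕ) : qbinom q n 0 = 1 := by cases n <;> rfl

lemma qbinom_succ_succ (n k : ℕ) :
    qbinom q (n+1) (k+1) = qbinom q n k + q ^ (k+1) * qbinom q n (k+1) := rfl

lemma qbinom_eq_zero : ∀ n k : ℕ, n < k → qbinom q n k = 0
  | 0, _+1, _ => rfl
  | n+1, k+1, h => by
    rw [qbinom_succ_succ, qbinom_eq_zero n k (by omega),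
      qbinom_eq_zero n (k+1) (by omega)]
    ring

lemma qbinom_diag : ∀ n : ℕ, qbinom q n n = 1
  | 0 => rfl
  | n+1 => by
    rw [qbinom_succ_succ, qbinom_diag n, qbinom_eq_zero q n (n+1) (by omega)]
    ring

lemma pascal2 : ∀ n k : ℕ, qbinom q (n+1) (k+1) = q^(n-k) * qbinom q n k + qbinom q n (k+1) := by
  intro n
  induction n with
  | zero =>
    intro k
    cases k with
    | zero => simp [qbinom_succ_succ, qbinom_zero_right, qbinom_eq_zero]
    | succ k => simp [qbinom_succ_succ, qbinom_eq_zero q 0 (k+1) (by omega),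
        qbinom_eq_zero q 0 (k+2) (by omega), qbinom_eq_zero q 1 (k+2) (by omega)]
  | succ n ih =>
    intro k
    rcases Nat.lt_or_ge n k with hk | hk
    · rcases Nat.lt_or_ge (n+1) k with hk2 | hk2
      · rw [qbinom_eq_zero q (n+2) (k+1) (by omega), qbinom_eq_zero q (n+1) k (by omega),
          qbinom_eq_zero q (n+1) (k+1) (by omega)]
        ring
      · have : k = n+1 := by omega
        subst this
        rw [qbinom_diag, qbinom_eq_zero q (n+1) (n+2) (by omega), qbinom_diag,
          Nat.sub_self]
        ring
    · cases k with
      | zero =>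
        conv_lhs => rw [qbinom_succ_succ, ih 0]
        conv_rhs => rw [qbinom_succ_succ]
        simp [qbinom_zero_right]
        ring
      | succ k' =>
        have e2 : q^(k'+1+1) * q^(n-(k'+1)) = q^(n-k') * q^(k'+1) := by
          rw [← pow_add, ← pow_add]; congr 1; omega
        conv_lhs => rw [qbinom_succ_succ, ih k', ih (k'+1)]
        conv_rhs => rw [qbinom_succ_succ q n k', qbinom_succ_succ q n (k'+1),
          show (n+1)-(k'+1) = n-k' from by omega]
        linear_combination (qbinom q n (k'+1)) * e2

/-- `(q^{n+1-j};q)_j` -/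
def poch (n j : ℕ) : R := ∏ i ∈ Finset.range j, (1 - q ^ (n + 1 - j + i))

lemma poch_zero (n : ℕ) : poch q n 0 = 1 := rfl

lemma poch_eq_zero {n j : ℕ} (h : n + 1 ≤ j) : poch q n j = 0 := by
  apply Finset.prod_eq_zero (i := 0) (Finset.mem_range.2 (by omega))
  rw [show n + 1 - j + 0 = 0 from by omega, pow_zero]
  ring

lemma poch_succ (n j : ℕ) : poch q n (j+1) = (1 - q ^ (n - j)) * poch q n j := by
  rcases Nat.lt_or_ge n j with h | h
  · rw [poch_eq_zero q (by omega), show n - j = 0 from by omega, pow_zero]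
    ring
  · unfold poch
    rw [Finset.prod_range_succ']
    rw [show n + 1 - (j+1) + 0 = n - j from by omega]
    rw [mul_comm]
    congr 1
    apply Finset.prod_congr rfl
    intro i _
    congr 2
    omega

lemma poch_succ_succ (n j : ℕ) : poch q (n+1) (j+1) = (1 - q ^ (n+1)) * poch q n j := by
  rcases Nat.lt_or_ge (n+1) j with h | h
  · rw [poch_eq_zero q (show n+1+1 ≤ j+1 from by omega),
      poch_eq_zero q (show n+1 ≤ j from by omega)]
    ring
  · unfold poch
    rw [Finset.prod_range_succ]
    rw [show n + 1 + 1 - (j+1) + j = n + 1 from by omega, mul_comm]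
    congr 1
    apply Finset.prod_congr rfl
    intro i _
    congr 2
    omega

def Ssum (m n : ℕ) : R := ∑ j ∈ Finset.range (n + 1), q ^ ((2 * m + 1) * j) * qbinom (q ^ 2) n j

def Tsum (m n : ℕ) : R := ∑ j ∈ Finset.range (m + 1),
    (-1 : R) ^ j * q ^ (j ^ 2) * qbinom (q ^ 2) m j * poch q n j

def Pprod (n : ℕ) : R := ∏ i ∈ Finset.range n, (1 + q ^ (i + 1))

lemma Ssum_zero (m : ℕ) : Ssum q m 0 = 1 := by
  simp [Ssum, qbinom_zero_right]

lemma Tsum_zero (m : ℕ) : Tsum q m 0 = 1 := by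
  rw [Tsum, Finset.sum_range_succ']
  have : ∀ j ∈ Finset.range m,
      (-1:R)^(j+1) * q^((j+1)^2) * qbinom (q^2) m (j+1) * poch q 0 (j+1) = 0 := by
    intro j _
    rw [poch_eq_zero q (show 0+1 ≤ j+1 from by omega)]
    ring
  rw [Finset.sum_congr rfl this]
  simp [qbinom_zero_right, poch_zero]

lemma Ssum_rec (m n : ℕ) :
    Ssum q m (n+1) = q^(2*m+1) * Ssum q m n + Ssum q (m+1) n := by
  have h1 : ∀ j ∈ Finset.range (n+1),
      q^((2*m+1)*(j+1)) * qbinom (q^2) (n+1) (j+1)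
      = q^(2*m+1) * (q^((2*m+1)*j) * qbinom (q^2) n j)
        + q^((2*m+3)*(j+1)) * qbinom (q^2) n (j+1) := by
    intro j _
    rw [qbinom_succ_succ, ← pow_mul]
    ring
  rw [Ssum, Finset.sum_range_succ', Finset.sum_congr rfl h1, Finset.sum_add_distrib,
    ← Finset.mul_sum]
  have h2 : Ssum q (m+1) n
      = (∑ j ∈ Finset.range (n+1), q^((2*m+3)*(j+1)) * qbinom (q^2) n (j+1)) + 1 := by
    have h3 : Ssum q (m+1) n = ∑ j ∈ Finset.range (n+2), q^((2*m+3)*j) * qbinom (q^2) n j := by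
      rw [Ssum, Finset.sum_range_succ (fun j => q^((2*m+3)*j) * qbinom (q^2) n j) (n+1),
        qbinom_eq_zero (q^2) n (n+1) (by omega)]
      simp only [mul_zero, add_zero]
      apply Finset.sum_congr rfl
      intro j _
      congr 2
    rw [h3, Finset.sum_range_succ']
    simp [qbinom_zero_right]
  rw [h2, Ssum]
  simp [qbinom_zero_right]
  ring

end

section star
variable {R : Type*} [CommRing R] (q : R)

lemma pkey (n j : ℕ) :
    q^((j+2)^2) * q^(n-(j+1)) * ((1 - q^(n-j)) * poch q n j)
      + q^((j+1)^2) * ((1 - q^(2*j+2) * q^(n-j)) * poch q n j)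
    = q^((j+1)^2) * ((1 - q^(2*n+2)) * poch q n j) := by
  rcases Nat.lt_or_ge j n with h | h
  · obtain ⟨k, rfl⟩ : ∃ k, n = j + 1 + k := ⟨n - j - 1, by omega⟩
    rw [show j+1+k-(j+1) = k from by omega, show j+1+k-j = k+1 from by omega]
    ring
  · rcases Nat.eq_or_lt_of_le h with h1 | h1
    · subst h1
      rw [show n-(n+1) = 0 from by omega, Nat.sub_self, pow_zero]
      ring
    · rw [poch_eq_zero q (show n+1 ≤ j from by omega)]
      ring

lemma Tstar (m n : ℕ) :
    (1 + q^(n+1)) * Tsum q m (n+1) = q^(2*m+1) * Tsum q m n + Tsum q (m+1) n := by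
  have hA : q^(2*m+1) * Tsum q m n
      = ∑ j ∈ Finset.range (m+1), (-1:R)^j * q^(j^2+2*j+1) *
          (qbinom (q^2) (m+1) (j+1) - qbinom (q^2) m (j+1)) * poch q n j := by
    rw [Tsum, Finset.mul_sum]
    apply Finset.sum_congr rfl
    intro j hj
    have hjm : j ≤ m := by have := Finset.mem_range.1 hj; omega
    obtain ⟨k, rfl⟩ : ∃ k, m = j + k := ⟨m - j, by omega⟩
    have h2 : (q^2)^k * qbinom (q^2) (j+k) j
        = qbinom (q^2) (j+k+1) (j+1) - qbinom (q^2) (j+k) (j+1) := by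
      rw [pascal2, show j+k-j = k from by omega]
      ring
    rw [← h2, ← pow_mul]
    ring
  have hB : Tsum q (m+1) n
      = 1 + ∑ j ∈ Finset.range (m+1),
          (-1:R)^(j+1) * q^((j+1)^2) * qbinom (q^2) (m+1) (j+1) * poch q n (j+1) := by
    rw [Tsum, Finset.sum_range_succ']
    simp only [pow_zero, one_mul, qbinom_zero_right, poch_zero, mul_one]
    ring
  have hC : ∀ j ∈ Finset.range (m+1),
      ((-1:R)^j * q^(j^2+2*j+1) * (qbinom (q^2) (m+1) (j+1) - qbinom (q^2) m (j+1)) * poch q n j)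
      + ((-1:R)^(j+1) * q^((j+1)^2) * qbinom (q^2) (m+1) (j+1) * poch q n (j+1))
      = ((-1:R)^j * (q^((j+1)^2) * q^(n-j)) * qbinom (q^2) m j * poch q n j)
        + ((-1:R)^(j+1) * q^((j+1)^2) * (1 - q^(2*j+2) * q^(n-j)) * qbinom (q^2) m (j+1)
            * poch q n j) := by
    intro j _
    rw [poch_succ, qbinom_succ_succ, ← pow_mul]
    ring
  have hR : q^(2*m+1) * Tsum q m n + Tsum q (m+1) n
      = 1 + ((∑ j ∈ Finset.range (m+1),
            (-1:R)^j * (q^((j+1)^2) * q^(n-j)) * qbinom (q^2) m j * poch q n j)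
          + ∑ j ∈ Finset.range (m+1),
            (-1:R)^(j+1) * q^((j+1)^2) * (1 - q^(2*j+2) * q^(n-j)) * qbinom (q^2) m (j+1)
              * poch q n j) := by
    have hmerge : (∑ j ∈ Finset.range (m+1),
          ((-1:R)^j * q^(j^2+2*j+1) * (qbinom (q^2) (m+1) (j+1) - qbinom (q^2) m (j+1))
            * poch q n j))
        + (∑ j ∈ Finset.range (m+1),
          ((-1:R)^(j+1) * q^((j+1)^2) * qbinom (q^2) (m+1) (j+1) * poch q n (j+1)))
        = (∑ j ∈ Finset.range (m+1),
          ((-1:R)^j * (q^((j+1)^2) * q^(n-j)) * qbinom (q^2) m j * poch q n j))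
        + (∑ j ∈ Finset.range (m+1),
          ((-1:R)^(j+1) * q^((j+1)^2) * (1 - q^(2*j+2) * q^(n-j)) * qbinom (q^2) m (j+1)
            * poch q n j)) := by
      rw [← Finset.sum_add_distrib, ← Finset.sum_add_distrib]
      exact Finset.sum_congr rfl hC
    rw [hA, hB]
    linear_combination hmerge
  -- reindex the first inner sum
  have hA2 : (∑ j ∈ Finset.range (m+1),
        (-1:R)^j * (q^((j+1)^2) * q^(n-j)) * qbinom (q^2) m j * poch q n j)
      = (∑ j ∈ Finset.range (m+1),
          (-1:R)^(j+1) * (q^((j+2)^2) * q^(n-(j+1))) * qbinom (q^2) m (j+1)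
            * ((1 - q^(n-j)) * poch q n j)) + q * q^n := by
    rw [Finset.sum_range_succ']
    have e0 : ((-1:R)^0 * (q^((0+1)^2) * q^(n-0)) * qbinom (q^2) m 0 * poch q n 0) = q * q^n := by
      rw [qbinom_zero_right, poch_zero, Nat.sub_zero]
      norm_num
    rw [e0]
    congr 1
    have hstep : ∀ j ∈ Finset.range m,
        (-1:R)^(j+1) * (q^((j+1+1)^2) * q^(n-(j+1))) * qbinom (q^2) m (j+1) * poch q n (j+1)
        = (-1:R)^(j+1) * (q^((j+2)^2) * q^(n-(j+1))) * qbinom (q^2) m (j+1)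
            * ((1 - q^(n-j)) * poch q n j) := by
      intro j _
      rw [poch_succ]
    rw [Finset.sum_congr rfl hstep]
    rw [Finset.sum_range_succ (fun j => (-1:R)^(j+1) * (q^((j+2)^2) * q^(n-(j+1)))
        * qbinom (q^2) m (j+1) * ((1 - q^(n-j)) * poch q n j)) m,
      qbinom_eq_zero (q^2) m (m+1) (by omega)]
    ring
  have hL : (1 + q^(n+1)) * Tsum q m (n+1)
      = (1 + q^(n+1)) + ∑ j ∈ Finset.range (m+1),
          (-1:R)^(j+1) * q^((j+1)^2) * qbinom (q^2) m (j+1)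
            * ((1 - q^(2*n+2)) * poch q n j) := by
    rw [Tsum, Finset.mul_sum, Finset.sum_range_succ']
    have e0 : (1 + q^(n+1)) * ((-1:R)^0 * q^(0^2) * qbinom (q^2) m 0 * poch q (n+1) 0)
        = 1 + q^(n+1) := by
      rw [qbinom_zero_right, poch_zero]
      norm_num
    rw [e0]
    have hstep : ∀ j ∈ Finset.range m,
        (1 + q^(n+1)) * ((-1:R)^(j+1) * q^((j+1)^2) * qbinom (q^2) m (j+1) * poch q (n+1) (j+1))
        = (-1:R)^(j+1) * q^((j+1)^2) * qbinom (q^2) m (j+1)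
            * ((1 - q^(2*n+2)) * poch q n j) := by
      intro j _
      rw [poch_succ_succ]
      ring
    rw [Finset.sum_congr rfl hstep]
    rw [Finset.sum_range_succ (fun j => (-1:R)^(j+1) * q^((j+1)^2) * qbinom (q^2) m (j+1)
        * ((1 - q^(2*n+2)) * poch q n j)) m,
      qbinom_eq_zero (q^2) m (m+1) (by omega)]
    ring
  rw [hL, hR, hA2]
  have hfin : ∀ j ∈ Finset.range (m+1),
      ((-1:R)^(j+1) * (q^((j+2)^2) * q^(n-(j+1))) * qbinom (q^2) m (j+1)
          * ((1 - q^(n-j)) * poch q n j))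
      + ((-1:R)^(j+1) * q^((j+1)^2) * (1 - q^(2*j+2) * q^(n-j)) * qbinom (q^2) m (j+1)
          * poch q n j)
      = (-1:R)^(j+1) * q^((j+1)^2) * qbinom (q^2) m (j+1)
          * ((1 - q^(2*n+2)) * poch q n j) := by
    intro j _
    linear_combination ((-1:R)^(j+1) * qbinom (q^2) m (j+1)) * pkey q n j
  rw [← Finset.sum_congr rfl hfin, Finset.sum_add_distrib]
  ring

end star

section main
variable {R : Type*} [CommRing R] (q : R)

lemma key : ∀ n m : ℕ, Ssum q m n = Pprod q n * Tsum q m n := by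
  intro n
  induction n with
  | zero =>
    intro m
    rw [Ssum_zero, Tsum_zero, Pprod]
    simp
  | succ n ih =>
    intro m
    rw [Ssum_rec, ih m, ih (m+1),
      show Pprod q (n+1) = Pprod q n * (1 + q^(n+1)) from Finset.prod_range_succ _ n]
    linear_combination (-(Pprod q n)) * (Tstar q m n)

end main

open Polynomial in
theorem stmt16 (m n : ℕ) :
    (∑ j ∈ Finset.range (n + 1), (X : ℤ[X]) ^ ((2 * m + 1) * j) * qbinom ((X : ℤ[X]) ^ 2) n j =
      (∏ i ∈ Finset.range n, (1 + (X : ℤ[X]) ^ (i + 1))) *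
        ∑ j ∈ Finset.range (m + 1),
          (-1 : ℤ[X]) ^ j * X ^ (j ^ 2) * qbinom ((X : ℤ[X]) ^ 2) m j *
            ∏ i ∈ Finset.range j, (1 - (X : ℤ[X]) ^ (n + 1 - j + i))) ∧
    (∏ i ∈ Finset.range n, (1 + (X : ℤ[X]) ^ (i + 1))) ∣
      ∑ j ∈ Finset.range (n + 1), (X : ℤ[X]) ^ ((2 * m + 1) * j) * qbinom ((X : ℤ[X]) ^ 2) n j := by
  have h := key (X : ℤ[X]) n m
  simp only [Ssum, Tsum, Pprod, poch] at h
  exact ⟨h, ⟨_, h⟩⟩
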